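/- Suppose each ∇f_i is Lipschitz continuous with constant L_i and set L := max_{1≤i≤m} L_i. Let B ∈ ℝ^{n×n} be symmetric positive definite, x ∈ ℝⁿ, d := d_B(x) ≠ 0, σ₂ ∈ (0,1), α > 0, x' := x + α d, and assume the Wolfe curvature condition D(x', d) ≥ σ₂ D(x, d) holds. Then ‖x' − x‖ ≥ ((1 − σ₂)/L) cos β · ‖d_SD(x)‖, where cos β := (dᵀBd)/(‖d‖ ‖Bd‖). -/

import Mathlib

open RealInnerProductSpace

noncomputable section

abbrev E (n : ℕ) := EuclideanSpace ℝ (Fin n)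

def maxD {n m : ℕ} [NeZero m] (f : Fin m → E n → ℝ) (x d : E n) : ℝ :=
  Finset.univ.sup' Finset.univ_nonempty (fun i => ⟪gradient (f i) x, d⟫)

def quad {n : ℕ} (B : Matrix (Fin n) (Fin n) ℝ) (d : E n) : ℝ :=
  ∑ i, ∑ j, d i * B i j * d j

def mulVecE {n : ℕ} (B : Matrix (Fin n) (Fin n) ℝ) (v : E n) : E n :=
  Matrix.toEuclideanLin B v

/-- real-analysis helper: scaling optimality gives `D ≤ -Q`. -/
private lemma aux1 (D Q : ℝ) (hQ : 0 < Q)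
    (h : ∀ t : ℝ, 0 < t → t < 1 → D + Q/2 ≤ t*D + t^2*Q/2) : D ≤ -Q := by
  refine le_of_forall_pos_le_add fun ε hε => ?_
  set t : ℝ := max (1 - ε/Q) (1/2) with ht
  have ht0 : (0:ℝ) < t := lt_of_lt_of_le (by norm_num) (le_max_right _ _)
  have ht1 : t < 1 := by
    apply max_lt
    · have : 0 < ε / Q := div_pos hε hQ
      linarith
    · norm_num
  have h1 := h t ht0 ht1
  have hle : 1 - ε/Q ≤ t := le_max_left _ _
  have h3 : (1-t)*Q ≤ ε := by
    have h2 : 1 - t ≤ ε/Q := by linarith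
    calc (1-t)*Q ≤ (ε/Q)*Q := by nlinarith
    _ = ε := by field_simp
  nlinarith

/-- real-analysis helper: first-order optimality. -/
private lemma aux2 (a c r : ℝ) (hr : 0 ≤ r)
    (h : ∀ t : ℝ, 0 < t → 0 ≤ t*a + t*c + t^2*r/2) : -c ≤ a := by
  refine le_of_forall_pos_le_add fun ε hε => ?_
  set t : ℝ := 2*ε/(r+1) with ht
  have ht0 : 0 < t := by positivity
  have h1 := h t ht0
  have h1' : 0 ≤ t * (a + c + t*r/2) := by nlinarith
  have h2 : 0 ≤ a + c + t*r/2 := nonneg_of_mul_nonneg_right h1' ht0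
  have h3 : t*(r+1) = 2*ε := by
    rw [ht]; field_simp
  have h4 : t*r/2 ≤ ε := by nlinarith
  linarith

private lemma maxD_smul {n m : ℕ} [NeZero m] (f : Fin m → E n → ℝ) (x u : E n)
    {t : ℝ} (ht : 0 ≤ t) : maxD f x (t • u) = t * maxD f x u := by
  unfold maxD
  rw [Finset.comp_sup'_eq_sup'_comp _ (fun y : ℝ => t * y)
    (fun a b => by simpa using mul_max_of_nonneg a b ht)]
  apply Finset.sup'_congr _ rfl
  intro i _
  exact real_inner_smul_right _ _ t

private lemma maxD_add_le {n m : ℕ} [NeZero m] (f : Fin m → E n → ℝ) (x u v : E n) :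
    maxD f x (u + v) ≤ maxD f x u + maxD f x v := by
  unfold maxD
  apply Finset.sup'_le
  intro i _
  rw [inner_add_right]
  exact add_le_add
    (Finset.le_sup' (fun i => (⟪gradient (f i) x, u⟫ : ℝ)) (Finset.mem_univ i))
    (Finset.le_sup' (fun i => (⟪gradient (f i) x, v⟫ : ℝ)) (Finset.mem_univ i))

private lemma quad_smul {n : ℕ} (B : Matrix (Fin n) (Fin n) ℝ) (t : ℝ) (u : E n) :
    quad B (t • u) = t^2 * quad B u := by
  unfold quad
  simp only [Finset.mul_sum]
  refine Finset.sum_congr rfl fun i _ => Finset.sum_congr rfl fun j _ => ?_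
  simp only [PiLp.smul_apply, smul_eq_mul]
  ring

private lemma inner_mulVecE {n : ℕ} (B : Matrix (Fin n) (Fin n) ℝ) (v u : E n) :
    ⟪mulVecE B v, u⟫ = ∑ i, ∑ j, (B i j * v j) * u i := by
  simp [mulVecE, Matrix.toEuclideanLin, Matrix.mulVec, dotProduct, PiLp.inner_apply,
    Finset.sum_mul]
  exact Finset.sum_congr rfl fun i _ => by
    rw [Finset.mul_sum]; exact Finset.sum_congr rfl fun j _ => by ring

private lemma quad_expand {n : ℕ} (B : Matrix (Fin n) (Fin n) ℝ)
    (hsym : ∀ i j, B i j = B j i) (v u : E n) (t : ℝ) :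
    quad B (v + t • u) = quad B v + 2*t*⟪mulVecE B v, u⟫ + t^2 * quad B u := by
  have h1 : quad B (v + t • u)
      = ∑ i, ∑ j, (v i * B i j * v j + t * (v i * B i j * u j) + t * (u i * B i j * v j)
          + t^2 * (u i * B i j * u j)) := by
    unfold quad
    refine Finset.sum_congr rfl fun i _ => Finset.sum_congr rfl fun j _ => ?_
    simp only [PiLp.add_apply, PiLp.smul_apply, smul_eq_mul]
    ring
  have hswap : ∑ i, ∑ j, v i * B i j * u j = ∑ i, ∑ j, u i * B i j * v j := by
    rw [Finset.sum_comm]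
    exact Finset.sum_congr rfl fun i _ => Finset.sum_congr rfl fun j _ => by rw [hsym]; ring
  have hBv : ∑ i, ∑ j, u i * B i j * v j = ⟪mulVecE B v, u⟫ := by
    rw [inner_mulVecE]
    exact Finset.sum_congr rfl fun i _ => Finset.sum_congr rfl fun j _ => by ring
  rw [h1]
  simp only [Finset.sum_add_distrib, ← Finset.mul_sum]
  rw [hswap, hBv]
  unfold quad
  ring

private lemma quad_eq_dot {n : ℕ} (B : Matrix (Fin n) (Fin n) ℝ) (u : E n) :
    quad B u = dotProduct (star (u : Fin n → ℝ)) (B.mulVec u) := by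
  simp only [dotProduct, Matrix.mulVec, Pi.star_apply, star_trivial, Finset.mul_sum]
  exact Finset.sum_congr rfl fun i _ => Finset.sum_congr rfl fun j _ => by ring

private lemma maxD_lip {n m : ℕ} [NeZero m] (f : Fin m → E n → ℝ)
    (L : Fin m → NNReal) (hL : ∀ i, LipschitzWith (L i) (fun z => gradient (f i) z))
    (Lmax : ℝ) (hLmax : Lmax = Finset.univ.sup' Finset.univ_nonempty fun i => (L i : ℝ))
    (x x' u : E n) :
    maxD f x' u ≤ maxD f x u + Lmax * ‖x' - x‖ * ‖u‖ := by
  conv_lhs => rw [maxD]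
  apply Finset.sup'_le
  intro i _
  have h1 : ⟪gradient (f i) x', u⟫
      = ⟪gradient (f i) x, u⟫ + ⟪gradient (f i) x' - gradient (f i) x, u⟫ := by
    rw [inner_sub_left]; ring
  have h2 : ⟪gradient (f i) x' - gradient (f i) x, u⟫
      ≤ ‖gradient (f i) x' - gradient (f i) x‖ * ‖u‖ := real_inner_le_norm _ _
  have h3 : ‖gradient (f i) x' - gradient (f i) x‖ ≤ (L i : ℝ) * ‖x' - x‖ := by
    have := (hL i).dist_le_mul x' x
    simpa [dist_eq_norm] using this
  have h4 : (L i : ℝ) ≤ Lmax := hLmax ▸ Finset.le_sup' (fun i => (L i : ℝ)) (Finset.mem_univ i)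
  have h5 : ⟪gradient (f i) x, u⟫ ≤ maxD f x u :=
    Finset.le_sup' (fun i => ⟪gradient (f i) x, u⟫) (Finset.mem_univ i)
  have p1 : ‖gradient (f i) x' - gradient (f i) x‖ * ‖u‖ ≤ (L i : ℝ) * ‖x' - x‖ * ‖u‖ :=
    mul_le_mul_of_nonneg_right h3 (norm_nonneg u)
  have p2 : (L i : ℝ) * ‖x' - x‖ * ‖u‖ ≤ Lmax * ‖x' - x‖ * ‖u‖ :=
    mul_le_mul_of_nonneg_right (mul_le_mul_of_nonneg_right h4 (norm_nonneg _)) (norm_nonneg u)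
  linarith

/-- lower bound on the step length under the Wolfe curvature condition. -/
theorem stmt19 {n m : ℕ} [NeZero m] (f : Fin m → E n → ℝ)
    (hf : ∀ i, ContDiff ℝ 1 (f i))
    (L : Fin m → NNReal) (hL : ∀ i, LipschitzWith (L i) (fun z => gradient (f i) z))
    (Lmax : ℝ) (hLmax : Lmax = Finset.univ.sup' Finset.univ_nonempty fun i => (L i : ℝ))
    (B : Matrix (Fin n) (Fin n) ℝ) (hB : B.PosDef)
    (x d dsd : E n) (hd0 : d ≠ 0)
    (hdB : ∀ dd : E n, maxD f x d + quad B d / 2 ≤ maxD f x dd + quad B dd / 2)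
    (hdsd : ∀ dd : E n, maxD f x dsd + ‖dsd‖ ^ 2 / 2 ≤ maxD f x dd + ‖dd‖ ^ 2 / 2)
    (σ₂ : ℝ) (hσ₂ : σ₂ ∈ Set.Ioo (0 : ℝ) 1)
    (α : ℝ) (hα : 0 < α) (x' : E n) (hx' : x' = x + α • d)
    (hcurv : σ₂ * maxD f x d ≤ maxD f x' d) :
    ((1 - σ₂) / Lmax) * (quad B d / (‖d‖ * ‖mulVecE B d‖)) * ‖dsd‖ ≤ ‖x' - x‖ := by
  by_cases hs : dsd = 0
  · simp [hs, norm_nonneg]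
  have hsym : ∀ i j, B i j = B j i := by
    intro i j
    have := congrFun (congrFun hB.1 i) j
    simpa [Matrix.conjTranspose_apply] using this.symm
  -- positivity of quad B d
  have hq : 0 < quad B d := by
    rw [quad_eq_dot]
    exact hB.dotProduct_mulVec_pos (by simpa using hd0)
  have hqn : ∀ u : E n, 0 ≤ quad B u := by
    intro u
    rw [quad_eq_dot]
    exact hB.posSemidef.dotProduct_mulVec_nonneg u
  -- key first-order optimality for d
  have key1 : ∀ u : E n, -⟪mulVecE B d, u⟫ ≤ maxD f x u := by
    intro u
    refine aux2 _ _ (quad B u) (hqn u) fun t ht => ?_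
    have h := hdB (d + t • u)
    have hsub := maxD_add_le f x d (t • u)
    rw [maxD_smul f x u ht.le] at hsub
    have hexp := quad_expand B hsym d u t
    linarith
  -- maxD f x d ≤ - quad B d
  have hDd : maxD f x d ≤ -quad B d := by
    refine aux1 _ _ hq fun t ht0 ht1 => ?_
    have h := hdB (t • d)
    rw [maxD_smul f x d ht0.le, quad_smul] at h
    linarith
  -- maxD f x dsd ≤ - ‖dsd‖²
  have hns : 0 < ‖dsd‖ := norm_pos_iff.mpr hs
  have hDs : maxD f x dsd ≤ -‖dsd‖^2 := by
    refine aux1 _ _ (by positivity) fun t ht0 ht1 => ?_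
    have h := hdsd (t • dsd)
    rw [maxD_smul f x dsd ht0.le, norm_smul] at h
    have : ‖(t:ℝ)‖ = t := by rw [Real.norm_eq_abs, abs_of_pos ht0]
    rw [this] at h
    nlinarith [h]
  -- ‖dsd‖ ≤ ‖mulVecE B d‖
  have key4 : ‖dsd‖ ≤ ‖mulVecE B d‖ := by
    have h1 := key1 dsd
    have h2 : ⟪mulVecE B d, dsd⟫ ≤ ‖mulVecE B d‖ * ‖dsd‖ := real_inner_le_norm _ _
    have h3 : ‖dsd‖^2 ≤ ‖mulVecE B d‖ * ‖dsd‖ := by nlinarith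
    nlinarith
  have hBd : 0 < ‖mulVecE B d‖ := lt_of_lt_of_le hns key4
  have hdn : 0 < ‖d‖ := norm_pos_iff.mpr hd0
  -- the step inequality
  have hLip := maxD_lip f L hL Lmax hLmax x x' d
  have hstep : (1 - σ₂) * quad B d ≤ Lmax * ‖x' - x‖ * ‖d‖ := by
    nlinarith [hcurv, hLip, hDd, hσ₂.2, hσ₂.1,
      mul_nonneg (by linarith [hσ₂.2] : (0:ℝ) ≤ 1 - σ₂)
        (by linarith : (0:ℝ) ≤ -quad B d - maxD f x d)]
  have hLpos : 0 < Lmax := by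
    by_contra h
    push_neg at h
    nlinarith [mul_nonneg (norm_nonneg (x' - x)) (norm_nonneg d), hσ₂.2, hq]
  have hdenom : 0 < Lmax * (‖d‖ * ‖mulVecE B d‖) := by positivity
  have key : ((1 - σ₂) * quad B d * ‖dsd‖) / (Lmax * (‖d‖ * ‖mulVecE B d‖)) ≤ ‖x' - x‖ := by
    rw [div_le_iff₀ hdenom]
    have h1 : (1 - σ₂) * quad B d * ‖dsd‖ ≤ (Lmax * ‖x' - x‖ * ‖d‖) * ‖dsd‖ :=
      mul_le_mul_of_nonneg_right hstep (norm_nonneg _)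
    have h2 : (Lmax * ‖x' - x‖ * ‖d‖) * ‖dsd‖ ≤ (Lmax * ‖x' - x‖ * ‖d‖) * ‖mulVecE B d‖ :=
      mul_le_mul_of_nonneg_left key4 (by positivity)
    nlinarith [h1, h2]
  calc ((1 - σ₂) / Lmax) * (quad B d / (‖d‖ * ‖mulVecE B d‖)) * ‖dsd‖
      = ((1 - σ₂) * quad B d * ‖dsd‖) / (Lmax * (‖d‖ * ‖mulVecE B d‖)) := by ring
    _ ≤ ‖x' - x‖ := key
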